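/- arXiv:2109.01746 — 3 statements merged into one kernel-verified Lean document; each statement's English description precedes it below -/
import Mathlib

section
/- Let P be a nonnegative n×n matrix. If Pa ⪯ a for every vector a in the set {e_1, e_2, …, e_n, j_n}, where e_1,…,e_n are the standard basis vectors of ℝⁿ and j_n = (1/n,…,1/n), then P is doubly stochastic. -/
def ColStochastic {n : ℕ} (P : Matrix (Fin n) (Fin n) ℝ) : Prop :=
  (∀ i j, 0 ≤ P i j) ∧ ∀ j, ∑ i, P i j = 1

def RowStochastic {n : ℕ} (P : Matrix (Fin n) (Fin n) ℝ) : Prop :=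
  (∀ i j, 0 ≤ P i j) ∧ ∀ i, ∑ j, P i j = 1

def DoublyStochastic {n : ℕ} (P : Matrix (Fin n) (Fin n) ℝ) : Prop :=
  ColStochastic P ∧ RowStochastic P

/-- The decreasing rearrangement `a↓` of a vector `a ∈ ℝⁿ`. -/
noncomputable def decRearrange {n : ℕ} (a : Fin n → ℝ) : Fin n → ℝ :=
  fun i => a (Tuple.sort (fun j => -a j) i)

/-- `Majorizes a b` means the vector `a` majorizes the vector `b`, i.e. `b ⪯ a`:
the partial sums of `b↓` are at most those of `a↓`, and the total sums are equal. -/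
noncomputable def Majorizes {n : ℕ} (a b : Fin n → ℝ) : Prop :=
  (∑ i, b i = ∑ i, a i) ∧
  ∀ k : ℕ, k < n →
    ∑ i ∈ Finset.univ.filter (fun i : Fin n => (i : ℕ) < k), decRearrange b i ≤
    ∑ i ∈ Finset.univ.filter (fun i : Fin n => (i : ℕ) < k), decRearrange a i

/-- each entry of a vector is at most the first entry of its decreasing rearrangement -/
lemma le_decRearrange_zero {n : ℕ} (b : Fin n → ℝ) (i : Fin n) (h : 0 < n) :
    b i ≤ decRearrange b ⟨0, h⟩ := by
  set σ := Tuple.sort (fun j => -b j) with hσ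
  have hm : Monotone ((fun j => -b j) ∘ σ) := Tuple.monotone_sort _
  have h2 : ((fun j => -b j) ∘ σ) ⟨0, h⟩ ≤ ((fun j => -b j) ∘ σ) (σ.symm i) :=
    hm (by exact Fin.mk_le_mk.mpr (Nat.zero_le _))
  simpa [decRearrange, ← hσ] using neg_le_neg_iff.mp (by simpa using h2)

theorem doublyStochastic_of_majorizes_basis {n : ℕ} (P : Matrix (Fin n) (Fin n) ℝ)
    (hP : ∀ i j, 0 ≤ P i j)
    (he : ∀ j : Fin n,
      Majorizes (fun i : Fin n => if i = j then (1 : ℝ) else 0)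
        (P.mulVec (fun i : Fin n => if i = j then (1 : ℝ) else 0)))
    (hj : Majorizes (fun _ : Fin n => (1 : ℝ) / n)
        (P.mulVec (fun _ : Fin n => (1 : ℝ) / n))) :
    DoublyStochastic P := by
  have hcol : ∀ j, ∑ i, P i j = 1 := by
    intro j
    have h := (he j).1
    simpa [Matrix.mulVec, dotProduct, mul_ite] using h
  refine ⟨⟨hP, hcol⟩, hP, ?_⟩
  -- total of row sums is n
  have htot : ∑ i : Fin n, ∑ j, P i j = (n : ℝ) := by
    rw [show ∑ i : Fin n, ∑ j, P i j = ∑ j, ∑ i : Fin n, P i j from Finset.sum_comm]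
    simp [hcol]
  -- each row sum is ≤ 1
  have hle : ∀ i, ∑ j, P i j ≤ 1 := by
    intro i
    match n, P, hP, hj, i with
    | 1, P, hP, hj, i =>
      have : i = 0 := Subsingleton.elim _ _
      subst this
      have := hcol 0
      simpa using this.le
    | (m + 2), P, hP, hj, i =>
      have hn : 0 < m + 2 := by omega
      have h1 := hj.2 1 (by omega)
      have hfilter : (Finset.univ.filter (fun i : Fin (m+2) => (i : ℕ) < 1)) = {(0 : Fin (m+2))} := by
        ext x
        simp only [Finset.mem_filter, Finset.mem_univ, true_and, Finset.mem_singleton, Fin.ext_iff, Fin.val_zero, Nat.lt_one_iff]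
      rw [hfilter, Finset.sum_singleton, Finset.sum_singleton] at h1
      -- decRearrange of constant is constant
      have hconst : decRearrange (fun _ : Fin (m+2) => (1 : ℝ) / ((m+2 : ℕ) : ℝ)) 0
          = 1 / ((m+2 : ℕ) : ℝ) := rfl
      set b := P.mulVec (fun _ : Fin (m+2) => (1 : ℝ) / ((m+2:ℕ):ℝ)) with hb
      have hbi : b i = (∑ j, P i j) / ((m+2:ℕ):ℝ) := by
        simp [hb, Matrix.mulVec, dotProduct, div_eq_mul_inv, ← Finset.sum_mul]
      have hmax : b i ≤ decRearrange b 0 := by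
        have := le_decRearrange_zero b i hn
        simpa using this
      have hkey : (∑ j, P i j) / ((m+2:ℕ):ℝ) ≤ 1 / ((m+2:ℕ):ℝ) := by
        rw [← hbi]
        calc b i ≤ decRearrange b 0 := hmax
          _ ≤ _ := by rw [← hconst]; exact h1
      have hpos : (0:ℝ) < ((m+2:ℕ):ℝ) := by positivity
      exact (div_le_div_iff_of_pos_right hpos).mp hkey
  -- conclude
  intro i
  by_contra hne
  have hlt : ∑ j, P i j < 1 := lt_of_le_of_ne (hle i) hne
  have : ∑ i : Fin n, ∑ j, P i j < ∑ _i : Fin n, (1:ℝ) :=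
    Finset.sum_lt_sum (fun k _ => hle k) ⟨i, Finset.mem_univ i, hlt⟩
  simp [htot] at this
end

section
/- Let a and b be vectors in ℝⁿ with nonnegative, nonincreasing coordinates such that b ⪯ a and b ≠ a. Then there exists a vector c ∈ ℝⁿ with nonnegative coordinates such that: (i) the coordinates of c are nonincreasing; (ii) b ⪯ c and c ⪯ a; (iii) d_H(b,c) < d_H(b,a); and (iv) c = T a for some n×n doubly stochastic matrix T. -/
lemma decRearrange_eq_self {n : ℕ} {a : Fin n → ℝ} (ha : Antitone a) :
    decRearrange a = a := by
  have hm : Monotone (fun j => -a j) := fun x y h => neg_le_neg (ha h)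
  unfold decRearrange
  rw [Tuple.sort_eq_refl_iff_monotone.2 hm]
  rfl

theorem exists_intermediate_vector {n : ℕ} (a b : Fin n → ℝ)
    (ha0 : ∀ i, 0 ≤ a i) (hb0 : ∀ i, 0 ≤ b i)
    (ha : Antitone a) (hb : Antitone b)
    (hmaj : Majorizes a b) (hne : b ≠ a) :
    ∃ c : Fin n → ℝ,
      (∀ i, 0 ≤ c i) ∧
      Antitone c ∧
      Majorizes c b ∧ Majorizes a c ∧
      hammingDist b c < hammingDist b a ∧
      ∃ T : Matrix (Fin n) (Fin n) ℝ, DoublyStochastic T ∧ T.mulVec a = c := by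
  classical
  obtain ⟨htot, hpart⟩ := hmaj
  simp only [decRearrange_eq_self ha, decRearrange_eq_self hb] at hpart
  -- the smallest index where a < b
  have hex : ∃ i, a i < b i := by
    by_contra h
    push_neg at h
    apply hne
    funext i
    by_contra hi
    have : ∑ i, b i < ∑ i, a i :=
      Finset.sum_lt_sum (fun i _ => h i)
        ⟨i, Finset.mem_univ i, lt_of_le_of_ne (h i) hi⟩
    linarith
  have hKne : (Finset.univ.filter (fun i : Fin n => a i < b i)).Nonempty := by
    obtain ⟨i, hi⟩ := hex
    exact ⟨i, by simp [hi]⟩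
  set k : Fin n := (Finset.univ.filter (fun i : Fin n => a i < b i)).min' hKne with hkdef
  have hk : a k < b k := by
    have := Finset.min'_mem _ hKne
    simpa using this
  have hblek : ∀ i : Fin n, i < k → b i ≤ a i := by
    intro i hik
    by_contra h
    push_neg at h
    have : k ≤ i := Finset.min'_le _ _ (by simp [h])
    exact absurd hik (not_lt.2 this)
  -- splitting and full-filter facts
  have hsplit : ∀ (m : Fin n) (x : Fin n → ℝ),
      ∑ i ∈ Finset.univ.filter (fun i : Fin n => (i : ℕ) < (m : ℕ) + 1), x i
        = (∑ i ∈ Finset.univ.filter (fun i : Fin n => (i : ℕ) < (m : ℕ)), x i) + x m := by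
    intro m x
    have hset : Finset.univ.filter (fun i : Fin n => (i : ℕ) < (m : ℕ) + 1)
        = insert m (Finset.univ.filter (fun i : Fin n => (i : ℕ) < (m : ℕ))) := by
      ext i
      simp [Nat.lt_succ_iff_lt_or_eq, Fin.ext_iff, or_comm]
      rw [Fin.le_def, Fin.lt_def]; omega
    rw [hset, Finset.sum_insert (by simp)]
    ring
  have hfull : ∀ m : ℕ, n ≤ m →
      Finset.univ.filter (fun i : Fin n => (i : ℕ) < m) = Finset.univ := by
    intro m hm
    apply Finset.filter_true_of_mem
    intro i _
    exact lt_of_lt_of_le i.isLt hm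
  have hple : ∀ m : ℕ,
      ∑ i ∈ Finset.univ.filter (fun i : Fin n => (i : ℕ) < m), b i ≤
      ∑ i ∈ Finset.univ.filter (fun i : Fin n => (i : ℕ) < m), a i := by
    intro m
    rcases lt_or_ge m n with h | h
    · exact hpart m h
    · rw [hfull m h]
      exact le_of_eq htot
  -- there is an index below k where b < a
  have hk1 : ∑ i ∈ Finset.univ.filter (fun i : Fin n => (i : ℕ) < (k : ℕ)), b i <
      ∑ i ∈ Finset.univ.filter (fun i : Fin n => (i : ℕ) < (k : ℕ)), a i := by
    have h := hple ((k : ℕ) + 1)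
    rw [hsplit k b, hsplit k a] at h
    linarith
  have hexj : ∃ i : Fin n, i < k ∧ b i < a i := by
    by_contra h
    push_neg at h
    have : ∑ i ∈ Finset.univ.filter (fun i : Fin n => (i : ℕ) < (k : ℕ)), a i ≤
        ∑ i ∈ Finset.univ.filter (fun i : Fin n => (i : ℕ) < (k : ℕ)), b i := by
      apply Finset.sum_le_sum
      intro i hi
      simp only [Finset.mem_filter, Finset.mem_univ, true_and] at hi
      exact h i (by rwa [Fin.lt_def])
    linarith
  have hJne : (Finset.univ.filter (fun i : Fin n => i < k ∧ b i < a i)).Nonempty := by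
    obtain ⟨i, hi1, hi2⟩ := hexj
    exact ⟨i, by simp [hi1, hi2]⟩
  set j : Fin n := (Finset.univ.filter (fun i : Fin n => i < k ∧ b i < a i)).max' hJne with hjdef
  have hjprop : j < k ∧ b j < a j := by
    have hmem := Finset.max'_mem _ hJne
    rw [← hjdef, Finset.mem_filter] at hmem
    exact hmem.2
  obtain ⟨hjk, hj⟩ := hjprop
  have hjmax : ∀ i : Fin n, i < k → b i < a i → i ≤ j := by
    intro i h1 h2
    exact Finset.le_max' _ _ (by simp [h1, h2])
  have hmid : ∀ i : Fin n, j < i → i < k → a i = b i := by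
    intro i h1 h2
    refine le_antisymm ?_ (hblek i h2)
    by_contra h
    push_neg at h
    exact absurd (hjmax i h2 h) (not_le.2 h1)
  set δ : ℝ := min (a j - b j) (b k - a k) with hδdef
  have hδ1 : δ ≤ a j - b j := min_le_left _ _
  have hδ2 : δ ≤ b k - a k := min_le_right _ _
  have hδpos : 0 < δ := lt_min (by linarith) (by linarith)
  have hbjk : b k ≤ b j := hb hjk.le
  have hajk : a k < a j := by linarith
  have hjk' : j ≠ k := ne_of_lt hjk
  have hjknat : (j : ℕ) < (k : ℕ) := hjk
  set c : Fin n → ℝ :=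
    fun i => a i + (if i = j then -δ else 0) + (if i = k then δ else 0) with hcdef
  have hcj : c j = a j - δ := by simp [hcdef, hjk']; ring
  have hck : c k = a k + δ := by simp [hcdef, Ne.symm hjk']
  have hco : ∀ i, i ≠ j → i ≠ k → c i = a i := by
    intro i h1 h2
    simp [hcdef, h1, h2]
  -- nonnegativity
  have hc0 : ∀ i, 0 ≤ c i := by
    intro i
    by_cases h1 : i = j
    · rw [h1, hcj]; have := hb0 j; linarith
    by_cases h2 : i = k
    · rw [h2, hck]; have := ha0 k; linarith
    · rw [hco i h1 h2]; exact ha0 i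
  -- antitone
  have hmono : Antitone c := by
    intro i1 i2 h12
    by_cases h1j : i1 = j
    · have h12' : j ≤ i2 := h1j ▸ h12
      rw [h1j, hcj]
      by_cases h2j : i2 = j
      · rw [h2j, hcj]
      by_cases h2k : i2 = k
      · rw [h2k, hck]; linarith
      · rw [hco i2 h2j h2k]
        rcases lt_or_ge i2 k with h2 | h2
        · have hj2 : j < i2 := lt_of_le_of_ne h12' (Ne.symm h2j)
          have hm := hmid i2 hj2 h2
          have hbb := hb hj2.le
          linarith
        · have haa := ha h2
          linarith
    by_cases h1k : i1 = k
    · have h12' : k ≤ i2 := h1k ▸ h12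
      have h2j : i2 ≠ j := by
        intro h
        rw [h] at h12'
        exact absurd (lt_of_lt_of_le hjk h12') (lt_irrefl _)
      rw [h1k, hck]
      by_cases h2k : i2 = k
      · rw [h2k, hck]
      · rw [hco i2 h2j h2k]
        have := ha h12'
        linarith
    · rw [hco i1 h1j h1k]
      by_cases h2j : i2 = j
      · rw [h2j, hcj]
        have h12' : i1 ≤ j := h2j ▸ h12
        have := ha h12'
        linarith
      by_cases h2k : i2 = k
      · rw [h2k, hck]
        have h12' : i1 ≤ k := h2k ▸ h12
        rcases lt_or_ge i1 j with h1 | h1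
        · have := ha h1.le; linarith
        · have hj1 : j < i1 := lt_of_le_of_ne h1 (Ne.symm h1j)
          have hik : i1 < k := lt_of_le_of_ne h12' h1k
          have hm := hmid i1 hj1 hik
          have hbb := hb hik.le
          linarith
      · rw [hco i2 h2j h2k]; exact ha h12
  -- sum formula
  have hcsum : ∀ s : Finset (Fin n), ∑ i ∈ s, c i =
      (∑ i ∈ s, a i) + (if j ∈ s then -δ else 0) + (if k ∈ s then δ else 0) := by
    intro s
    simp only [hcdef]
    rw [Finset.sum_add_distrib, Finset.sum_add_distrib,
      Finset.sum_ite_eq' s j (fun _ => -δ), Finset.sum_ite_eq' s k (fun _ => δ)]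
  have hpc : ∀ m : ℕ,
      ∑ i ∈ Finset.univ.filter (fun i : Fin n => (i : ℕ) < m), c i =
      (∑ i ∈ Finset.univ.filter (fun i : Fin n => (i : ℕ) < m), a i)
        + (if (j : ℕ) < m then -δ else 0) + (if (k : ℕ) < m then δ else 0) := by
    intro m
    rw [hcsum]
    simp [Finset.mem_filter]
  have hctot : ∑ i, c i = ∑ i, a i := by
    rw [hcsum]
    simp
  refine ⟨c, hc0, hmono, ?_, ?_, ?_, ?_⟩
  · -- Majorizes c b
    constructor
    · rw [hctot]; exact htot
    · intro m hm
      simp only [decRearrange_eq_self hb, decRearrange_eq_self hmono]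
      rw [hpc m]
      by_cases h1 : (j : ℕ) < m
      · by_cases h2 : (k : ℕ) < m
        · rw [if_pos h1, if_pos h2]
          have := hple m
          linarith
        · rw [if_pos h1, if_neg h2]
          have hjmem : j ∈ Finset.univ.filter (fun i : Fin n => (i : ℕ) < m) := by
            simp [h1]
          have key : a j - b j ≤
              ∑ i ∈ Finset.univ.filter (fun i : Fin n => (i : ℕ) < m), (a i - b i) := by
            apply Finset.single_le_sum (f := fun i => a i - b i) _ hjmem
            intro i hi
            simp only [Finset.mem_filter, Finset.mem_univ, true_and] at hi
            show 0 ≤ a i - b i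
            have hik : i < k := by
              rw [Fin.lt_def]
              omega
            have := hblek i hik
            linarith
          rw [Finset.sum_sub_distrib] at key
          linarith
      · by_cases h2 : (k : ℕ) < m
        · omega
        · rw [if_neg h1, if_neg h2]
          have := hple m
          linarith
  · -- Majorizes a c
    constructor
    · exact hctot
    · intro m hm
      simp only [decRearrange_eq_self ha, decRearrange_eq_self hmono]
      rw [hpc m]
      split_ifs <;> linarith
  · -- hamming
    have hsub : Finset.univ.filter (fun i => b i ≠ c i) ⊆
        Finset.univ.filter (fun i => b i ≠ a i) := by
      intro i hi
      simp only [Finset.mem_filter, Finset.mem_univ, true_and] at hi ⊢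
      by_cases h1 : i = j
      · rw [h1]; exact ne_of_lt hj
      by_cases h2 : i = k
      · rw [h2]; exact ne_of_gt hk
      · rw [hco i h1 h2] at hi; exact hi
    have hstrict : Finset.univ.filter (fun i => b i ≠ c i) ⊂
        Finset.univ.filter (fun i => b i ≠ a i) := by
      rcases le_or_gt (a j - b j) (b k - a k) with hmin | hmin
      · have hδeq : δ = a j - b j := min_eq_left hmin
        have hcjb : c j = b j := by rw [hcj]; linarith
        refine (Finset.ssubset_iff_of_subset hsub).2 ⟨j, ?_, ?_⟩
        · simp [ne_of_lt hj]
        · simp [hcjb]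
      · have hδeq : δ = b k - a k := min_eq_right hmin.le
        have hckb : c k = b k := by rw [hck]; linarith
        refine (Finset.ssubset_iff_of_subset hsub).2 ⟨k, ?_, ?_⟩
        · simp [ne_of_gt hk]
        · simp [hckb]
    have := Finset.card_lt_card hstrict
    simpa [hammingDist] using this
  · -- the doubly stochastic matrix
    set t : ℝ := δ / (a j - a k) with htdef
    have ht0 : 0 ≤ t := div_nonneg hδpos.le (by linarith)
    have ht1 : t ≤ 1 := by
      rw [htdef, div_le_one (by linarith)]
      linarith
    have htmul : t * (a j - a k) = δ := by
      rw [htdef, div_mul_cancel₀]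
      linarith
    refine ⟨fun i i' => (1 - t) * (if i' = i then 1 else 0)
        + t * (if i' = Equiv.swap j k i then 1 else 0), ⟨⟨?_, ?_⟩, ⟨?_, ?_⟩⟩, ?_⟩
    · intro i i'
      have h1 : (0:ℝ) ≤ (1 - t) * (if i' = i then 1 else 0) :=
        mul_nonneg (by linarith) (by split_ifs <;> norm_num)
      have h2 : (0:ℝ) ≤ t * (if i' = Equiv.swap j k i then 1 else 0) :=
        mul_nonneg ht0 (by split_ifs <;> norm_num)
      exact add_nonneg h1 h2
    · -- column sums
      intro j'
      have hrw : ∀ i : Fin n, (j' = Equiv.swap j k i) = (i = Equiv.swap j k j') := by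
        intro i
        apply propext
        constructor
        · intro h; rw [h, Equiv.swap_apply_self]
        · intro h; rw [h, Equiv.swap_apply_self]
      simp only [hrw]
      rw [Finset.sum_add_distrib, ← Finset.mul_sum, ← Finset.mul_sum,
        Finset.sum_ite_eq Finset.univ j' (fun _ => (1:ℝ)),
        Finset.sum_ite_eq' Finset.univ (Equiv.swap j k j') (fun _ => (1:ℝ))]
      simp
    · intro i i'
      have h1 : (0:ℝ) ≤ (1 - t) * (if i' = i then 1 else 0) :=
        mul_nonneg (by linarith) (by split_ifs <;> norm_num)
      have h2 : (0:ℝ) ≤ t * (if i' = Equiv.swap j k i then 1 else 0) :=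
        mul_nonneg ht0 (by split_ifs <;> norm_num)
      exact add_nonneg h1 h2
    · -- row sums
      intro i
      rw [Finset.sum_add_distrib, ← Finset.mul_sum, ← Finset.mul_sum,
        Finset.sum_ite_eq' Finset.univ i (fun _ => (1:ℝ)),
        Finset.sum_ite_eq' Finset.univ (Equiv.swap j k i) (fun _ => (1:ℝ))]
      simp
    · -- T.mulVec a = c
      funext i
      have hmv : (Matrix.mulVec (fun i i' => (1 - t) * (if i' = i then 1 else 0)
          + t * (if i' = Equiv.swap j k i then 1 else 0)) a) i
          = (1 - t) * a i + t * a (Equiv.swap j k i) := by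
        simp only [Matrix.mulVec, dotProduct, add_mul, mul_assoc, ite_mul,
          one_mul, zero_mul]
        rw [Finset.sum_add_distrib, ← Finset.mul_sum, ← Finset.mul_sum,
          Finset.sum_ite_eq' Finset.univ i a,
          Finset.sum_ite_eq' Finset.univ (Equiv.swap j k i) a]
        simp
      rw [hmv]
      by_cases h1 : i = j
      · rw [h1, Equiv.swap_apply_left, hcj]
        nlinarith [htmul]
      by_cases h2 : i = k
      · rw [h2, Equiv.swap_apply_right, hck]
        nlinarith [htmul]
      · rw [Equiv.swap_apply_of_ne_of_ne h1 h2, hco i h1 h2]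
        ring
end

section
/- Let a and b be vectors in ℝⁿ with nonnegative coordinates. Then a majorizes b (b ⪯ a) if and only if b lies in the convex hull of the set { P_σ a : σ ∈ S_n } of all vectors obtained by permuting the coordinates of a (the S_n-permutohedron generated by a). In particular, if b ⪯ a then there is a doubly stochastic n×n matrix P with b = P a, and conversely. -/
def permMatrix {n : ℕ} (σ : Equiv.Perm (Fin n)) : Matrix (Fin n) (Fin n) ℝ :=
  fun i j => if i = σ j then 1 else 0

set_option maxHeartbeats 1000000

open Finset

section Aux

lemma antitone_decRearrange {n : ℕ} (a : Fin n → ℝ) : Antitone (decRearrange a) := by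
  intro i j hij
  have h := Tuple.monotone_sort (fun j => -a j) hij
  simp only [Function.comp_apply, neg_le_neg_iff] at h
  exact h

lemma sum_decRearrange {n : ℕ} (a : Fin n → ℝ) : ∑ i, decRearrange a i = ∑ i, a i :=
  Equiv.sum_comp (Tuple.sort (fun j => -a j)) a

lemma strictMono_le' {k n : ℕ} (g : Fin k → Fin n) (hg : StrictMono g) (j : Fin k) :
    (j : ℕ) ≤ (g j : ℕ) := by
  have key : ∀ m : ℕ, ∀ j : Fin k, (j : ℕ) = m → m ≤ (g j : ℕ) := by
    intro m
    induction m with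
    | zero => intro j _; exact Nat.zero_le _
    | succ p ih =>
      intro j hj
      have hp : p < k := by omega
      have h1 : (⟨p, hp⟩ : Fin k) < j := by simp [Fin.lt_def, hj]
      have h4 : (g ⟨p, hp⟩ : ℕ) < (g j : ℕ) := hg h1
      have h3 := ih ⟨p, hp⟩ rfl
      omega
  exact key _ j rfl

lemma image_castLE {n k : ℕ} (hk : k ≤ n) :
    (univ : Finset (Fin k)).image (Fin.castLE hk) = univ.filter (fun i : Fin n => (i : ℕ) < k) := by
  ext x
  simp only [mem_image, mem_univ, true_and, mem_filter]
  constructor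
  · rintro ⟨j, rfl⟩; exact j.isLt
  · intro hx; exact ⟨⟨(x : ℕ), hx⟩, by ext; simp⟩

lemma sum_filter_lt_eq {n k : ℕ} (hk : k ≤ n) (f : Fin n → ℝ) :
    ∑ i ∈ univ.filter (fun i : Fin n => (i : ℕ) < k), f i
      = ∑ j : Fin k, f (Fin.castLE hk j) := by
  rw [← image_castLE hk, Finset.sum_image (by intro x _ y _ h; exact Fin.castLE_injective hk h)]

lemma image_orderEmb {n k : ℕ} (S : Finset (Fin n)) (h : S.card = k) :
    (univ : Finset (Fin k)).image (S.orderEmbOfFin h) = S := by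
  ext x
  simp only [mem_image, mem_univ, true_and]
  constructor
  · rintro ⟨j, rfl⟩; exact Finset.orderEmbOfFin_mem S h j
  · intro hx
    have : x ∈ Set.range (S.orderEmbOfFin h) := by rw [Finset.range_orderEmbOfFin]; exact hx
    obtain ⟨j, hj⟩ := this; exact ⟨j, hj⟩

lemma sum_le_sum_filter_lt {n : ℕ} (f : Fin n → ℝ) (hf : Antitone f) (S : Finset (Fin n)) :
    ∑ i ∈ S, f i ≤ ∑ i ∈ univ.filter (fun i : Fin n => (i : ℕ) < S.card), f i := by
  set k := S.card with hk
  have hkn : k ≤ n := by simpa using Finset.card_le_univ S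
  rw [sum_filter_lt_eq hkn]
  rw [← image_orderEmb S hk.symm,
    Finset.sum_image (by intro x _ y _ h; exact (S.orderEmbOfFin hk.symm).injective h)]
  refine Finset.sum_le_sum fun j _ => hf ?_
  have := strictMono_le' (S.orderEmbOfFin hk.symm) (S.orderEmbOfFin hk.symm).strictMono j
  exact Fin.le_def.2 (by simpa using this)

lemma card_filter_lt {n k : ℕ} (hk : k ≤ n) :
    (univ.filter (fun i : Fin n => (i : ℕ) < k)).card = k := by
  rw [← image_castLE hk, Finset.card_image_of_injective _ (Fin.castLE_injective hk), card_univ,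
    Fintype.card_fin]

lemma sum_subset_le_top {n : ℕ} (a : Fin n → ℝ) (S : Finset (Fin n)) :
    ∑ i ∈ S, a i ≤ ∑ i ∈ univ.filter (fun i : Fin n => (i : ℕ) < S.card), decRearrange a i := by
  set σ := Tuple.sort (fun j => -a j) with hσ
  have h1 : ∑ i ∈ S, a i = ∑ j ∈ S.image σ.symm, decRearrange a j := by
    rw [Finset.sum_image (by intro x _ y _ h; exact σ.symm.injective h)]
    refine Finset.sum_congr rfl fun x _ => ?_
    simp [decRearrange, hσ]
  have h2 : (S.image σ.symm).card = S.card := Finset.card_image_of_injective _ σ.symm.injective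
  rw [h1, ← h2]
  exact sum_le_sum_filter_lt _ (antitone_decRearrange a) _

lemma top_eq_sum_subset {n k : ℕ} (a : Fin n → ℝ) (hk : k ≤ n) :
    ∃ S : Finset (Fin n), S.card = k ∧
      ∑ i ∈ univ.filter (fun i : Fin n => (i : ℕ) < k), decRearrange a i = ∑ i ∈ S, a i := by
  set σ := Tuple.sort (fun j => -a j) with hσ
  refine ⟨(univ.filter (fun i : Fin n => (i : ℕ) < k)).image σ, ?_, ?_⟩
  · rw [Finset.card_image_of_injective _ σ.injective, card_filter_lt hk]
  · rw [Finset.sum_image (by intro x _ y _ h; exact σ.injective h)]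
    exact Finset.sum_congr rfl fun x _ => rfl

lemma permMatrix_mulVec {n : ℕ} (σ : Equiv.Perm (Fin n)) (a : Fin n → ℝ) :
    (permMatrix σ).mulVec a = fun i => a (σ.symm i) := by
  ext i
  simp only [Matrix.mulVec, permMatrix, dotProduct, ite_mul, one_mul, zero_mul]
  rw [Finset.sum_eq_single (σ.symm i)]
  · simp
  · intro j _ hj
    rw [if_neg]
    intro h
    exact hj (by rw [h, Equiv.symm_apply_apply])
  · simp

lemma majorizes_of_mem_hull {n : ℕ} (a b : Fin n → ℝ)
    (hmem : b ∈ convexHull ℝ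
      {x : Fin n → ℝ | ∃ σ : Equiv.Perm (Fin n), x = (permMatrix σ).mulVec a}) :
    Majorizes a b := by
  rw [mem_convexHull_iff_exists_fintype] at hmem
  obtain ⟨ι, hι, w, z, hw0, hw1, hz, hsum⟩ := hmem
  choose π hπ using hz
  have hb : ∀ j, b j = ∑ i, w i * a ((π i).symm j) := by
    intro j
    rw [← hsum]
    simp only [Finset.sum_apply, Pi.smul_apply, smul_eq_mul]
    refine Finset.sum_congr rfl fun i _ => ?_
    rw [hπ i, permMatrix_mulVec]
  have hsubsum : ∀ (S : Finset (Fin n)), ∑ j ∈ S, b j ≤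
      ∑ i ∈ univ.filter (fun i : Fin n => (i : ℕ) < S.card), decRearrange a i := by
    intro S
    calc ∑ j ∈ S, b j = ∑ i, w i * ∑ j ∈ S, a ((π i).symm j) := by
          simp only [hb]
          rw [Finset.sum_comm]
          exact Finset.sum_congr rfl fun i _ => by rw [Finset.mul_sum]
      _ ≤ ∑ i, w i * ∑ t ∈ univ.filter (fun t : Fin n => (t : ℕ) < S.card), decRearrange a t := by
          refine Finset.sum_le_sum fun i _ => mul_le_mul_of_nonneg_left ?_ (hw0 i)
          have himg : ∑ j ∈ S, a ((π i).symm j) = ∑ j ∈ S.image (π i).symm, a j := by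
            rw [Finset.sum_image (by intro x _ y _ h; exact (π i).symm.injective h)]
          have hcard : (S.image (π i).symm).card = S.card :=
            Finset.card_image_of_injective _ (π i).symm.injective
          rw [himg, ← hcard]
          exact sum_subset_le_top a _
      _ = ∑ t ∈ univ.filter (fun t : Fin n => (t : ℕ) < S.card), decRearrange a t := by
          rw [← Finset.sum_mul, hw1, one_mul]
  constructor
  · calc ∑ j, b j = ∑ i, w i * ∑ j, a ((π i).symm j) := by
          simp only [hb]
          rw [Finset.sum_comm]
          exact Finset.sum_congr rfl fun i _ => by rw [Finset.mul_sum]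
      _ = ∑ i, w i * ∑ j, a j := by
          refine Finset.sum_congr rfl fun i _ => ?_
          rw [Equiv.sum_comp (π i).symm a]
      _ = ∑ j, a j := by rw [← Finset.sum_mul, hw1, one_mul]
  · intro k hk
    obtain ⟨S, hScard, hSeq⟩ := top_eq_sum_subset b (le_of_lt hk)
    rw [hSeq, ← hScard]
    exact hsubsum S

lemma filter_sum_eq_range {n k : ℕ} (hk : k ≤ n) (v : Fin n → ℝ) :
    ∑ i ∈ univ.filter (fun i : Fin n => (i : ℕ) < k), v i
      = ∑ m ∈ range k, (if h : m < n then v ⟨m, h⟩ else 0) := by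
  set V : ℕ → ℝ := fun m => if h : m < n then v ⟨m, h⟩ else 0 with hV
  have h1 : ∑ i ∈ univ.filter (fun i : Fin n => (i : ℕ) < k), v i
      = ∑ i : Fin n, (if (i : ℕ) < k then V i else 0) := by
    rw [Finset.sum_filter]
    refine Finset.sum_congr rfl fun i _ => ?_
    simp [hV, i.isLt]
  rw [h1, Fin.sum_univ_eq_sum_range (fun m => if m < k then V m else 0) n,
    ← Finset.sum_filter]
  congr 1
  ext m
  simp only [mem_filter, mem_range]
  omega

lemma abel_le {n : ℕ} (c u v : Fin n → ℝ) (hc : Antitone c)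
    (hpartial : ∀ k, k < n →
      ∑ i ∈ univ.filter (fun i : Fin n => (i : ℕ) < k), v i ≤
      ∑ i ∈ univ.filter (fun i : Fin n => (i : ℕ) < k), u i)
    (htot : ∑ i, v i = ∑ i, u i) :
    ∑ i, c i * v i ≤ ∑ i, c i * u i := by
  rcases Nat.eq_zero_or_pos n with rfl | hn
  · simp
  set C : ℕ → ℝ := fun m => if h : m < n then c ⟨m, h⟩ else 0 with hC
  set U : ℕ → ℝ := fun m => if h : m < n then u ⟨m, h⟩ else 0 with hU
  set V : ℕ → ℝ := fun m => if h : m < n then v ⟨m, h⟩ else 0 with hV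
  have hconvV : ∑ i : Fin n, c i * v i = ∑ m ∈ range n, C m * V m := by
    rw [← Fin.sum_univ_eq_sum_range (fun m => C m * V m) n]
    refine Finset.sum_congr rfl fun i _ => by simp [hC, hV, i.isLt]
  have hconvU : ∑ i : Fin n, c i * u i = ∑ m ∈ range n, C m * U m := by
    rw [← Fin.sum_univ_eq_sum_range (fun m => C m * U m) n]
    refine Finset.sum_congr rfl fun i _ => by simp [hC, hU, i.isLt]
  have htotR : ∑ m ∈ range n, V m = ∑ m ∈ range n, U m := by
    rw [← Fin.sum_univ_eq_sum_range V n, ← Fin.sum_univ_eq_sum_range U n]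
    calc ∑ i : Fin n, V i = ∑ i : Fin n, v i :=
          Finset.sum_congr rfl fun i _ => by simp [hV, i.isLt]
      _ = ∑ i : Fin n, u i := htot
      _ = ∑ i : Fin n, U i := Finset.sum_congr rfl fun i _ => by simp [hU, i.isLt]
  have hpartR : ∀ k, k < n → ∑ m ∈ range k, V m ≤ ∑ m ∈ range k, U m := by
    intro k hk
    rw [← filter_sum_eq_range (le_of_lt hk) v, ← filter_sum_eq_range (le_of_lt hk) u]
    exact hpartial k hk
  have bp1 := Finset.sum_range_by_parts C V n
  have bp2 := Finset.sum_range_by_parts C U n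
  simp only [smul_eq_mul] at bp1 bp2
  rw [hconvV, hconvU, bp1, bp2, htotR]
  have : ∑ i ∈ range (n - 1), (C (i + 1) - C i) * ∑ j ∈ range (i + 1), U j ≤
      ∑ i ∈ range (n - 1), (C (i + 1) - C i) * ∑ j ∈ range (i + 1), V j := by
    refine Finset.sum_le_sum fun i hi => ?_
    have hi1 : i + 1 < n := by have := mem_range.1 hi; omega
    have hΔ : C (i + 1) - C i ≤ 0 := by
      have h1 : C (i + 1) = c ⟨i + 1, hi1⟩ := by simp [hC, hi1]
      have h2 : C i = c ⟨i, by omega⟩ := by simp [hC, show i < n by omega]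
      rw [h1, h2, sub_nonpos]
      exact hc (by simp [Fin.le_def])
    exact mul_le_mul_of_nonpos_left (hpartR (i + 1) hi1) hΔ
  linarith

lemma mem_hull_of_majorizes {n : ℕ} (a b : Fin n → ℝ) (hmaj : Majorizes a b) :
    b ∈ convexHull ℝ
      {x : Fin n → ℝ | ∃ σ : Equiv.Perm (Fin n), x = (permMatrix σ).mulVec a} := by
  set s : Set (Fin n → ℝ) :=
    {x : Fin n → ℝ | ∃ σ : Equiv.Perm (Fin n), x = (permMatrix σ).mulVec a} with hs
  by_contra hbn
  have hfin : s.Finite := by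
    have : s = Set.range (fun σ : Equiv.Perm (Fin n) => (permMatrix σ).mulVec a) := by
      ext x; simp [hs, Set.range, eq_comm]
    rw [this]
    exact Set.finite_range _
  obtain ⟨f, u, hfu, hub⟩ :=
    geometric_hahn_banach_closed_point (convex_convexHull ℝ s) (hfin.isClosed_convexHull ℝ) hbn
  set c : Fin n → ℝ := fun i => f (Pi.single i 1) with hc
  have hf : ∀ y : Fin n → ℝ, f y = ∑ i, c i * y i := by
    intro y
    calc f y = f (∑ i, Pi.single i (y i)) := by rw [Finset.univ_sum_single]
      _ = ∑ i, f (Pi.single i (y i)) := map_sum f _ _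
      _ = ∑ i, c i * y i := by
          refine Finset.sum_congr rfl fun i _ => ?_
          have : Pi.single i (y i) = y i • (Pi.single i (1 : ℝ) : Fin n → ℝ) := by
            ext j
            simp [Pi.single_apply, mul_comm]
          rw [this, map_smul]
          simp [hc, mul_comm]
  set σc := Tuple.sort (fun j => -c j) with hσc
  set σb := Tuple.sort (fun j => -b j) with hσb
  set σa := Tuple.sort (fun j => -a j) with hσa
  have step1 : ∑ i, c i * b i ≤ ∑ i, decRearrange c i * decRearrange b i := by
    have hmono : Monovary (decRearrange c) (decRearrange b) :=
      (antitone_decRearrange c).monovary (antitone_decRearrange b)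
    have h := hmono.sum_mul_comp_perm_le_sum_mul (σ := σc.trans σb.symm)
    calc ∑ i, c i * b i = ∑ i, decRearrange c i * decRearrange b ((σc.trans σb.symm) i) := by
          rw [← Equiv.sum_comp σc (fun j => c j * b j)]
          refine Finset.sum_congr rfl fun i _ => ?_
          simp [decRearrange, hσc, hσb]
      _ ≤ _ := h
  have step2 : ∑ i, decRearrange c i * decRearrange b i ≤
      ∑ i, decRearrange c i * decRearrange a i := by
    refine abel_le _ _ _ (antitone_decRearrange c) hmaj.2 ?_
    rw [sum_decRearrange, sum_decRearrange]
    exact hmaj.1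
  set σ : Equiv.Perm (Fin n) := (σc.symm.trans σa).symm with hσ
  set x : Fin n → ℝ := (permMatrix σ).mulVec a with hx
  have step3 : ∑ i, decRearrange c i * decRearrange a i = f x := by
    rw [hf x]
    have hxj : ∀ j, x j = a (σa (σc.symm j)) := by
      intro j
      rw [hx, permMatrix_mulVec]
      simp [hσ]
    calc ∑ i, decRearrange c i * decRearrange a i
        = ∑ i, (fun j => c j * x j) (σc i) := by
          refine Finset.sum_congr rfl fun i _ => ?_
          show c (σc i) * a (σa i) = c (σc i) * x (σc i)
          rw [hxj (σc i), Equiv.symm_apply_apply]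
      _ = ∑ j, c j * x j := Fintype.sum_equiv σc _ _ (fun i => rfl)
  have hxmem : x ∈ convexHull ℝ s := subset_convexHull ℝ s ⟨σ, rfl⟩
  have h1 : f x < u := hfu x hxmem
  have h2 : f b ≤ f x := by rw [hf b, ← step3]; exact step1.trans step2
  linarith

lemma sum_mulVec' {n : ℕ} {ι : Type*} [Fintype ι] (M : ι → Matrix (Fin n) (Fin n) ℝ)
    (v : Fin n → ℝ) : (∑ i, M i).mulVec v = ∑ i, (M i).mulVec v := by
  ext j
  simp only [Matrix.mulVec, dotProduct, Finset.sum_apply, Matrix.sum_apply,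
    Finset.sum_mul]
  exact Finset.sum_comm

lemma permMatrix_entry_nonneg {n : ℕ} (σ : Equiv.Perm (Fin n)) (i j : Fin n) :
    0 ≤ permMatrix σ i j := by
  unfold permMatrix
  split <;> norm_num

lemma permMatrix_row_sum {n : ℕ} (σ : Equiv.Perm (Fin n)) (i : Fin n) :
    ∑ j, permMatrix σ i j = 1 := by
  unfold permMatrix
  rw [Finset.sum_eq_single (σ.symm i)]
  · simp
  · intro j _ hj
    rw [if_neg]
    intro h
    exact hj (by rw [h, Equiv.symm_apply_apply])
  · simp

lemma permMatrix_col_sum {n : ℕ} (σ : Equiv.Perm (Fin n)) (j : Fin n) :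
    ∑ i, permMatrix σ i j = 1 := by
  unfold permMatrix
  rw [Finset.sum_eq_single (σ j)] <;> simp

lemma ds_combo {n : ℕ} {ι : Type} [Fintype ι] (w : ι → ℝ) (π : ι → Equiv.Perm (Fin n))
    (hw0 : ∀ i, 0 ≤ w i) (hw1 : ∑ i, w i = 1) :
    DoublyStochastic (∑ i, w i • permMatrix (π i)) := by
  have hentry : ∀ i j, (∑ t, w t • permMatrix (π t)) i j = ∑ t, w t * permMatrix (π t) i j := by
    intro i j
    simp [Matrix.sum_apply]
  refine ⟨⟨?_, ?_⟩, ⟨?_, ?_⟩⟩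
  · intro i j
    rw [hentry]
    exact Finset.sum_nonneg fun t _ => mul_nonneg (hw0 t) (permMatrix_entry_nonneg _ _ _)
  · intro j
    simp only [hentry]
    rw [Finset.sum_comm]
    calc ∑ t, ∑ i, w t * permMatrix (π t) i j = ∑ t, w t := by
          refine Finset.sum_congr rfl fun t _ => ?_
          rw [← Finset.mul_sum, permMatrix_col_sum, mul_one]
      _ = 1 := hw1
  · intro i j
    rw [hentry]
    exact Finset.sum_nonneg fun t _ => mul_nonneg (hw0 t) (permMatrix_entry_nonneg _ _ _)
  · intro i
    simp only [hentry]
    rw [Finset.sum_comm]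
    calc ∑ t, ∑ j, w t * permMatrix (π t) i j = ∑ t, w t := by
          refine Finset.sum_congr rfl fun t _ => ?_
          rw [← Finset.mul_sum, permMatrix_row_sum, mul_one]
      _ = 1 := hw1

lemma permMatrix_eq {n : ℕ} (σ : Equiv.Perm (Fin n)) :
    Equiv.Perm.permMatrix ℝ σ = permMatrix σ⁻¹ := by
  ext i j
  simp only [Equiv.Perm.permMatrix, PEquiv.toMatrix_apply, Equiv.toPEquiv_apply, Option.mem_def,
    Option.some.injEq, permMatrix]
  congr 1
  simp only [eq_iff_iff]
  constructor
  · rintro rfl; simp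
  · rintro rfl; simp

lemma hull_iff_ds {n : ℕ} (a b : Fin n → ℝ) :
    b ∈ convexHull ℝ
        {x : Fin n → ℝ | ∃ σ : Equiv.Perm (Fin n), x = (permMatrix σ).mulVec a} ↔
      ∃ P : Matrix (Fin n) (Fin n) ℝ, DoublyStochastic P ∧ b = P.mulVec a := by
  constructor
  · intro hmem
    rw [mem_convexHull_iff_exists_fintype] at hmem
    obtain ⟨ι, hι, w, z, hw0, hw1, hz, hsum⟩ := hmem
    choose π hπ using hz
    refine ⟨∑ i, w i • permMatrix (π i), ds_combo w π hw0 hw1, ?_⟩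
    rw [sum_mulVec', ← hsum]
    refine Finset.sum_congr rfl fun i _ => ?_
    rw [Matrix.smul_mulVec, hπ i]
  · rintro ⟨P, hP, rfl⟩
    have hP' : P ∈ doublyStochastic ℝ (Fin n) :=
      mem_doublyStochastic_iff_sum.2 ⟨hP.1.1, hP.2.2, hP.1.2⟩
    obtain ⟨w, hw0, hw1, hw2⟩ := exists_eq_sum_perm_of_mem_doublyStochastic hP'
    refine mem_convexHull_of_exists_fintype w
      (fun σ => (Equiv.Perm.permMatrix ℝ σ).mulVec a) hw0 hw1
      (fun σ => ⟨σ⁻¹, by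
        show (Equiv.Perm.permMatrix ℝ σ).mulVec a = (permMatrix σ⁻¹).mulVec a
        rw [permMatrix_eq]⟩) ?_
    rw [← hw2, sum_mulVec']
    refine Finset.sum_congr rfl fun σ _ => ?_
    rw [Matrix.smul_mulVec]

end Aux

theorem majorizes_iff_mem_permutohedron {n : ℕ} (a b : Fin n → ℝ)
    (ha : ∀ i, 0 ≤ a i) (hb : ∀ i, 0 ≤ b i) :
    (Majorizes a b ↔
      b ∈ convexHull ℝ
        {x : Fin n → ℝ | ∃ σ : Equiv.Perm (Fin n), x = (permMatrix σ).mulVec a}) ∧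
    (Majorizes a b ↔
      ∃ P : Matrix (Fin n) (Fin n) ℝ, DoublyStochastic P ∧ b = P.mulVec a) := by
  have h1 : Majorizes a b ↔
      b ∈ convexHull ℝ
        {x : Fin n → ℝ | ∃ σ : Equiv.Perm (Fin n), x = (permMatrix σ).mulVec a} :=
    ⟨mem_hull_of_majorizes a b, majorizes_of_mem_hull a b⟩
  exact ⟨h1, h1.trans (hull_iff_ds a b)⟩
end
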